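/- Let G be a group acting on a set X with finitely many orbits, with orbit representatives x₁, …, x_m, and let J ≤ G be a subgroup of finite index n such that Stab_G(xᵢ) ≤ J for each i. Let T = {x₁, …, x_m}. Then {gJT : g ∈ G} (where JT = ∪ᵢ Jxᵢ) is a partition of X into exactly n blocks, permuted transitively by G. -/
import Mathlib


open Pointwise

theorem multi_orbit_block_partition {G X : Type*} [Group G] [MulAction G X]
    (m : ℕ) (hm : 0 < m) (x : Fin m → X)
    (hcover : ∀ y : X, ∃ i, y ∈ MulAction.orbit G (x i))
    (hdisj : ∀ i j, i ≠ j → Disjoint (MulAction.orbit G (x i)) (MulAction.orbit G (x j)))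
    (J : Subgroup G) (n : ℕ) (hn : n ≠ 0) (hidx : J.index = n)
    (hstab : ∀ i, MulAction.stabilizer G (x i) ≤ J) :
    Setoid.IsPartition
        (Set.range fun g : G => g • ⋃ i, (fun j => j • x i) '' (J : Set G)) ∧
      Nat.card (Set.range fun g : G => g • ⋃ i, (fun j => j • x i) '' (J : Set G)) = n ∧
      ∀ S ∈ (Set.range fun g : G => g • ⋃ i, (fun j => j • x i) '' (J : Set G)),
        ∀ S' ∈ (Set.range fun g : G => g • ⋃ i, (fun j => j • x i) '' (J : Set G)),
          ∃ h : G, h • S = S' := by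
  set JT : Set X := ⋃ i, (fun j => j • x i) '' (J : Set G) with hJT
  have hmem : ∀ (j : G) (i : Fin m), j ∈ J → j • x i ∈ JT := fun j i hj =>
    Set.mem_iUnion.2 ⟨i, ⟨j, hj, rfl⟩⟩
  have hmemJT : ∀ y, y ∈ JT ↔ ∃ i, ∃ j ∈ J, j • x i = y := by
    intro y
    simp only [hJT, Set.mem_iUnion, Set.mem_image, SetLike.mem_coe]
  -- key coset lemma
  have key : ∀ (g g' : G) (i k : Fin m) (j j' : G), j ∈ J → j' ∈ J →
      (g * j) • x i = (g' * j') • x k → g⁻¹ * g' ∈ J := by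
    intro g g' i k j j' hj hj' heq
    have hik : i = k := by
      by_contra hne
      have h1 : x k ∈ MulAction.orbit G (x i) :=
        ⟨(g' * j')⁻¹ * (g * j), by show ((g' * j')⁻¹ * (g * j)) • x i = x k; rw [mul_smul, heq, inv_smul_smul]⟩
      exact Set.disjoint_left.1 (hdisj i k hne) h1 (MulAction.mem_orbit_self _)
    subst hik
    have hs : (g' * j')⁻¹ * (g * j) ∈ J := by
      apply hstab i
      rw [MulAction.mem_stabilizer_iff, mul_smul, heq, inv_smul_smul]
    have hgg : g⁻¹ * g' = j * ((g' * j')⁻¹ * (g * j))⁻¹ * j'⁻¹ := by group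
    rw [hgg]
    exact mul_mem (mul_mem hj (inv_mem hs)) (inv_mem hj')
  have hcoset : ∀ g g' : G, g⁻¹ * g' ∈ J → g • JT = g' • JT := by
    have hsub : ∀ g g' : G, g⁻¹ * g' ∈ J → g' • JT ⊆ g • JT := by
      intro g g' h y hy
      obtain ⟨z, hz, rfl⟩ := hy
      obtain ⟨i, j, hj, rfl⟩ := (hmemJT z).1 hz
      refine ⟨(g⁻¹ * g' * j) • x i, hmem _ _ (mul_mem h hj), ?_⟩
      show g • ((g⁻¹ * g' * j) • x i) = g' • (j • x i)
      rw [← mul_smul, ← mul_smul]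
      congr 1
      group
    intro g g' h
    exact subset_antisymm
      (hsub g' g (by simpa using inv_mem h)) (hsub g g' h)
  have hrep : ∀ g g' : G, g • JT = g' • JT → g⁻¹ * g' ∈ J := by
    intro g g' h
    have hx : g' • x ⟨0, hm⟩ ∈ g • JT := by
      rw [h]
      exact ⟨x ⟨0, hm⟩, by simpa using hmem 1 ⟨0, hm⟩ (one_mem J), rfl⟩
    obtain ⟨z, hz, hzz⟩ := hx
    obtain ⟨i, j, hj, rfl⟩ := (hmemJT z).1 hz
    have := key g g' i ⟨0, hm⟩ j 1 hj (one_mem J)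
      (by rw [mul_one, mul_smul]; exact hzz)
    exact this
  have hint : ∀ g g' : G, (g • JT ∩ g' • JT).Nonempty → g • JT = g' • JT := by
    rintro g g' ⟨y, hy, hy'⟩
    obtain ⟨z, hz, rfl⟩ := hy
    obtain ⟨i, j, hj, rfl⟩ := (hmemJT z).1 hz
    obtain ⟨z', hz', hzz⟩ := hy'
    obtain ⟨k, j', hj', rfl⟩ := (hmemJT z').1 hz'
    exact hcoset g g' (key g g' i k j j' hj hj'
      (by rw [mul_smul, mul_smul]; exact hzz.symm))
  refine ⟨⟨?_, ?_⟩, ?_, ?_⟩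
  · rintro ⟨g, hg⟩
    have h2 : ((fun g : G => g • JT) g).Nonempty :=
      ⟨g • x ⟨0, hm⟩, x ⟨0, hm⟩, by simpa using hmem 1 ⟨0, hm⟩ (one_mem J), rfl⟩
    rw [hg] at h2
    exact Set.not_nonempty_empty h2
  · intro y
    obtain ⟨i, g, rfl⟩ := hcover y
    refine ⟨g • JT, ⟨⟨g, rfl⟩, ⟨x i, by simpa using hmem 1 i (one_mem J), rfl⟩⟩, ?_⟩
    rintro S ⟨⟨g', rfl⟩, hyS⟩
    exact hint g' g ⟨g • x i, hyS, ⟨x i, by simpa using hmem 1 i (one_mem J), rfl⟩⟩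
  · rw [← hidx]
    have : J.index = Nat.card (G ⧸ J) := rfl
    rw [this]
    refine (Nat.card_congr (Equiv.ofBijective
      (Quotient.lift (fun g : G => (⟨g • JT, g, rfl⟩ :
        Set.range fun g : G => g • JT))
        (fun a b hab => Subtype.ext
          (hcoset a b ((QuotientGroup.leftRel_apply).1 hab)))) ⟨?_, ?_⟩)).symm
    · intro a b
      refine Quotient.inductionOn₂ a b (fun g g' h => ?_)
      have : g • JT = g' • JT := congrArg Subtype.val h
      exact Quotient.sound ((QuotientGroup.leftRel_apply).2 (hrep g g' this))
    · rintro ⟨S, g, rfl⟩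
      exact ⟨⟦g⟧, rfl⟩
  · rintro S ⟨g, rfl⟩ S' ⟨g', rfl⟩
    refine ⟨g' * g⁻¹, ?_⟩
    rw [smul_smul, inv_mul_cancel_right]
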